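/- Let U ⊆ ℂ² be open, let a₁, a₂, b₁, b₂ : U → ℝ be functions with |b₂| < 1 everywhere, and define J : U → M₄(ℝ) as the 4×4 real matrix with rows (0, −1, a₁, a₂), (1, 0, (a₁b₁b₂ − a₂b₁² − a₁b₁ − a₂)/(b₂ − 1), a₁b₂ − a₂b₁ − a₁), (0, 0, b₁, −1 + b₂), (0, 0, 1 + (b₁² + b₂)/(1 − b₂), −b₁). Define β₁ = (b₂ − i·b₁)/(b₂ − 2 + i·b₁) and β₂ = (a₂ + i·(a₁b₂ − a₂b₁ − a₁))/(b₂ − 2 + i·b₁). Let Ω ⊆ ℂ be open, let f = (f¹, f², f³, f⁴) : Ω → U ⊆ ℝ⁴ be a map whose partial derivatives f_x, f_y exist at a point z₀ ∈ Ω, and set h = f¹ + i·f², k = f³ + i·f⁴. Then the equation f_y(z₀) = J(f(z₀))·f_x(z₀) (as vectors in ℝ⁴) holds if and only if ∂h/∂z̄(z₀) = β₂(f(z₀))·conj(∂k/∂z(z₀)) and ∂k/∂z̄(z₀) = β₁(f(z₀))·conj(∂k/∂z(z₀)). -/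

import Mathlib

open Complex MeasureTheory Set Metric Topology
open scoped ContDiff

/-- Pointwise partial derivative of `u` in the `x`-direction (junk value if it does not exist). -/
noncomputable def pdx (u : ℂ → ℂ) (z : ℂ) : ℂ := deriv (fun t : ℝ => u (z + ↑t)) 0

/-- Pointwise partial derivative of `u` in the `y`-direction (junk value if it does not exist). -/
noncomputable def pdy (u : ℂ → ℂ) (z : ℂ) : ℂ := deriv (fun t : ℝ => u (z + ↑t * Complex.I)) 0

/-- Both pointwise partial derivatives `u_x`, `u_y` exist at `z`. -/
def PartialsAt (u : ℂ → ℂ) (z : ℂ) : Prop :=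
  (∃ a, HasDerivAt (fun t : ℝ => u (z + ↑t)) a 0) ∧
  (∃ b, HasDerivAt (fun t : ℝ => u (z + ↑t * Complex.I)) b 0)

/-- The pointwise Wirtinger derivative `∂u/∂z̄ = (u_x + i u_y)/2`. -/
noncomputable def dzbar (u : ℂ → ℂ) (z : ℂ) : ℂ := (pdx u z + Complex.I * pdy u z) / 2

/-- The pointwise Wirtinger derivative `∂u/∂z = (u_x - i u_y)/2`. -/
noncomputable def dzz (u : ℂ → ℂ) (z : ℂ) : ℂ := (pdx u z - Complex.I * pdy u z) / 2

/-- Condition (*): the partial derivatives `u_x`, `u_y` exist at every point of `Ω`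
except possibly at countably many points. -/
def CondStar (u : ℂ → ℂ) (Ω : Set ℂ) : Prop :=
  ∃ S : Set ℂ, S.Countable ∧ ∀ z ∈ Ω \ S, PartialsAt u z

/-- The open rectangle `(a₁,b₁) × (a₂,b₂)` in `ℂ = ℝ²`. -/
def Rect (a₁ b₁ a₂ b₂ : ℝ) : Set ℂ := {z : ℂ | z.re ∈ Set.Ioo a₁ b₁ ∧ z.im ∈ Set.Ioo a₂ b₂}

private lemma helperX {L N R D : ℂ} (hD : D ≠ 0) :
    L / 2 = N / D * (starRingEnd ℂ (R / 2)) ↔ L * D = N * starRingEnd ℂ R := by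
  rw [map_div₀, show (starRingEnd ℂ) 2 = 2 from by simp [Complex.ext_iff], div_mul_div_comm,
    div_eq_div_iff two_ne_zero (mul_ne_zero hD two_ne_zero)]
  constructor
  · intro h; linear_combination h / 2
  · intro h; linear_combination 2 * h

/-- Lemma (lem5.1): the J-holomorphy equation in normal coordinates is equivalent to
the pair of complex equations with coefficients β₁, β₂. -/
theorem stmt17 (U : Set (Fin 4 → ℝ)) (hU : IsOpen U)
    (a₁ a₂ b₁ b₂ : (Fin 4 → ℝ) → ℝ) (hb₂ : ∀ p ∈ U, |b₂ p| < 1)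
    (J : (Fin 4 → ℝ) → Matrix (Fin 4) (Fin 4) ℝ)
    (hJ : ∀ p, J p = Matrix.of
      ![![0, -1, a₁ p, a₂ p],
        ![1, 0,
          (a₁ p * b₁ p * b₂ p - a₂ p * (b₁ p) ^ 2 - a₁ p * b₁ p - a₂ p) / (b₂ p - 1),
          a₁ p * b₂ p - a₂ p * b₁ p - a₁ p],
        ![0, 0, b₁ p, -1 + b₂ p],
        ![0, 0, 1 + ((b₁ p) ^ 2 + b₂ p) / (1 - b₂ p), -(b₁ p)]])
    (β₁ β₂ : (Fin 4 → ℝ) → ℂ)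
    (hβ₁ : ∀ p, β₁ p = ((b₂ p : ℂ) - Complex.I * (b₁ p : ℂ)) /
      ((b₂ p : ℂ) - 2 + Complex.I * (b₁ p : ℂ)))
    (hβ₂ : ∀ p, β₂ p = ((a₂ p : ℂ) + Complex.I *
        ((a₁ p : ℂ) * (b₂ p : ℂ) - (a₂ p : ℂ) * (b₁ p : ℂ) - (a₁ p : ℂ))) /
      ((b₂ p : ℂ) - 2 + Complex.I * (b₁ p : ℂ)))
    (Ω : Set ℂ) (hΩ : IsOpen Ω) (f : ℂ → (Fin 4 → ℝ)) (hf : MapsTo f Ω U)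
    (z₀ : ℂ) (hz₀ : z₀ ∈ Ω) (fx fy : Fin 4 → ℝ)
    (hfx : HasDerivAt (fun t : ℝ => f (z₀ + ↑t)) fx 0)
    (hfy : HasDerivAt (fun t : ℝ => f (z₀ + ↑t * Complex.I)) fy 0) :
    fy = (J (f z₀)).mulVec fx ↔
      ((((fx 0 : ℂ) + (fx 1 : ℂ) * Complex.I) +
          Complex.I * ((fy 0 : ℂ) + (fy 1 : ℂ) * Complex.I)) / 2 =
        β₂ (f z₀) * starRingEnd ℂ
          ((((fx 2 : ℂ) + (fx 3 : ℂ) * Complex.I) -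
            Complex.I * ((fy 2 : ℂ) + (fy 3 : ℂ) * Complex.I)) / 2)) ∧
      ((((fx 2 : ℂ) + (fx 3 : ℂ) * Complex.I) +
          Complex.I * ((fy 2 : ℂ) + (fy 3 : ℂ) * Complex.I)) / 2 =
        β₁ (f z₀) * starRingEnd ℂ
          ((((fx 2 : ℂ) + (fx 3 : ℂ) * Complex.I) -
            Complex.I * ((fy 2 : ℂ) + (fy 3 : ℂ) * Complex.I)) / 2)) := by
  obtain ⟨hbl, hbr⟩ := abs_lt.mp (hb₂ (f z₀) (hf hz₀))
  set A1 := a₁ (f z₀) with hA1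
  set A2 := a₂ (f z₀) with hA2
  set B1 := b₁ (f z₀) with hB1'
  set B2 := b₂ (f z₀) with hB2'
  have h1B : (1:ℝ) - B2 ≠ 0 := ne_of_gt (by linarith)
  have hB1 : B2 - 1 ≠ 0 := by intro h; apply h1B; linarith
  have hdet : ((B2 - 2)^2 + B1^2) ≠ 0 := by
    nlinarith [sq_nonneg B1, mul_pos (show (0:ℝ) < 2 - B2 by linarith)
      (show (0:ℝ) < 2 - B2 by linarith)]
  have hD : ((B2 : ℂ) - 2 + Complex.I * (B1 : ℂ)) ≠ 0 := by
    intro h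
    have := congrArg Complex.re h
    simp at this
    linarith
  rw [hβ₁, hβ₂, helperX hD, helperX hD, hJ]
  constructor
  · intro h
    have h0 := congrFun h 0
    have h1 := congrFun h 1
    have h2 := congrFun h 2
    have h3 := congrFun h 3
    simp [Matrix.mulVec, dotProduct, Fin.sum_univ_four] at h0 h1 h2 h3
    have h1' : fy 1 * (B2 - 1) = fx 0 * (B2 - 1)
        + (A1*B1*B2 - A2*B1^2 - A1*B1 - A2) * fx 2
        + (A1*B2 - A2*B1 - A1) * (B2 - 1) * fx 3 := by
      rw [h1, ← hA1, ← hA2, ← hB1', ← hB2']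
      linear_combination (A1*B1*B2 - A2*B1^2 - A1*B1 - A2) * fx 2 * inv_mul_cancel₀ hB1
    have h3' : fy 3 * (1 - B2) = (1 + B1^2) * fx 2 - B1 * (1 - B2) * fx 3 := by
      rw [h3, ← hB1', ← hB2']
      linear_combination (B1^2 + B2) * fx 2 * inv_mul_cancel₀ h1B
    constructor
    · rw [Complex.ext_iff]
      simp only [map_sub, map_add, map_mul, Complex.conj_ofReal, Complex.conj_I]
      constructor
      · simp
        apply mul_left_cancel₀ h1B
        linear_combination (-B1*(1-B2)) * h0 + (B2-2) * h1'
          + ((1-B2)*(A1*B2 - A2*B1 - A1)) * h2 + (-A2) * h3'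
      · simp
        apply mul_left_cancel₀ h1B
        linear_combination ((1-B2)*(B2-2)) * h0 + B1 * h1'
          + (-(1-B2)*A2) * h2 + (-(A1*B2 - A2*B1 - A1)) * h3'
    · rw [Complex.ext_iff]
      simp only [map_sub, map_add, map_mul, Complex.conj_ofReal, Complex.conj_I]
      constructor
      · simp
        linear_combination (2:ℝ) * h3' - 2*B1 * h2
      · simp
        linear_combination (-2:ℝ) * h2
  · rintro ⟨hc1, hc2⟩
    have e1 := congrArg Complex.re hc1
    have e1' := congrArg Complex.im hc1
    have e2 := congrArg Complex.re hc2
    have e2' := congrArg Complex.im hc2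
    simp only [map_sub, map_add, map_mul, Complex.conj_ofReal, Complex.conj_I] at e1 e1' e2 e2'
    simp at e1 e1' e2 e2'
    have hy2 : fy 2 = B1 * fx 2 + (-1 + B2) * fx 3 := by
      linear_combination (-1/2 : ℝ) * e2'
    have hy3 : fy 3 * (1 - B2) = (1 + B1^2) * fx 2 - B1 * (1 - B2) * fx 3 := by
      linear_combination (1/2 : ℝ) * e2 + B1 * hy2
    have hy0 : fy 0 = -(fx 1) + A1 * fx 2 + A2 * fx 3 := by
      apply mul_left_cancel₀ (mul_ne_zero hdet h1B)
      linear_combination (-B1*(1-B2)) * e1 + ((B2-2)*(1-B2)) * e1'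
        + ((1-B2)*((B2-2)*A2 + B1*(A1*B2 - A2*B1 - A1))) * hy2
        + ((B2-2)*(A1*B2 - A2*B1 - A1) - B1*A2) * hy3
    have hy1 : fy 1 * (B2 - 1) = fx 0 * (B2 - 1)
        + (A1*B1*B2 - A2*B1^2 - A1*B1 - A2) * fx 2
        + (A1*B2 - A2*B1 - A1) * (B2 - 1) * fx 3 := by
      apply mul_left_cancel₀ hdet
      linear_combination ((B2-2)*(1-B2)) * e1 + (B1*(1-B2)) * e1'
        + (-(1-B2)*((B2-2)*(A1*B2 - A2*B1 - A1) - B1*A2)) * hy2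
        + ((B2-2)*A2 + B1*(A1*B2 - A2*B1 - A1)) * hy3
    funext i
    fin_cases i <;>
      simp [Matrix.mulVec, dotProduct, Fin.sum_univ_four]
    · linear_combination hy0
    · linear_combination (-1 + B2)⁻¹ * hy1 - (fy 1 - fx 0 - (A1*B2 - A2*B1 - A1) * fx 3) *
        inv_mul_cancel₀ (show (-1 + B2 : ℝ) ≠ 0 by intro h; apply hB1; linarith)
    · linear_combination hy2
    · linear_combination (1 - B2)⁻¹ * hy3 - (fy 3 + B1 * fx 3 - fx 2) * inv_mul_cancel₀ h1B
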